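/- Consider a nested singleton choice model with M nests: given offered parameters u_1,…,u_M ≥ 0, nest i is chosen with probability u_i/(1 + ∑_{i'} u_{i'}) and no purchase happens with probability 1/(1 + ∑_{i'} u_{i'}). Suppose the same offer is repeated until the first no-purchase event (the epoch), and let n̂_i be the number of times nest i is chosen during the epoch. Then E[n̂_i] = u_i. -/

import Mathlib

open MeasureTheory ProbabilityTheory

/-- If the outer measures of a set and of its complement add to `1` for a
probability measure, the set is null measurable. -/
lemma nullMeasurableSet_of_add_compl_eq_one {Ω : Type*} [MeasurableSpace Ω]
    {P : Measure Ω} [IsProbabilityMeasure P] {E : Set Ω}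
    (h : P E + P Eᶜ = 1) : NullMeasurableSet E P := by
  set H := toMeasurable P E with hHdef
  set H' := toMeasurable P Eᶜ with hH'def
  have hEH : E ⊆ H := subset_toMeasurable _ _
  have hEH' : Eᶜ ⊆ H' := subset_toMeasurable _ _
  have hmH : MeasurableSet H := measurableSet_toMeasurable _ _
  have hmH' : MeasurableSet H' := measurableSet_toMeasurable _ _
  have hunion : P (H ∪ H') = 1 := by
    refine le_antisymm prob_le_one ?_
    calc (1 : ENNReal) = P Set.univ := measure_univ.symm
    _ ≤ P (H ∪ H') := measure_mono (by
        intro x _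
        by_cases hx : x ∈ E
        exacts [Or.inl (hEH hx), Or.inr (hEH' hx)])
  have hsum : P H + P H' = 1 := by
    rw [hHdef, hH'def, measure_toMeasurable, measure_toMeasurable, h]
  have hinter : P (H ∩ H') = 0 := by
    have h2 := measure_union_add_inter (μ := P) H hmH'
    rw [hunion, hsum] at h2
    have h3 : (1 : ENNReal) + P (H ∩ H') = 1 + 0 := by simpa using h2
    exact (ENNReal.add_right_inj ENNReal.one_ne_top).mp h3
  have hae : H =ᵐ[P] E := by
    rw [MeasureTheory.ae_eq_set]
    constructor
    · refine measure_mono_null ?_ hinter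
      intro x hx
      exact ⟨hx.1, hEH' hx.2⟩
    · simpa [Set.diff_eq_empty.mpr hEH] using (measure_empty (μ := P))
  exact hmH.nullMeasurableSet.congr hae

set_option maxHeartbeats 1000000 in
open MeasureTheory ProbabilityTheory in
/-- In the nested singleton model, repeat the same offer (with nest-level
utilities `u i`) i.i.d. until the first no-purchase draw (`none`). The expected
number of times nest `i` is chosen during this epoch equals `u i`. -/
theorem stmt6 {Ω : Type*} [MeasurableSpace Ω] (P : Measure Ω)
    [IsProbabilityMeasure P]
    (M : ℕ) (hM : 1 ≤ M) (u : Fin M → ℝ) (hu : ∀ i, 0 ≤ u i)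
    (X : ℕ → Ω → Option (Fin M))
    (hindep : iIndepFun (m := fun _ => ⊤) X P)
    (hsome : ∀ t i, P {ω | X t ω = some i}
      = ENNReal.ofReal (u i / (1 + ∑ i', u i')))
    (hnone : ∀ t, P {ω | X t ω = none}
      = ENNReal.ofReal (1 / (1 + ∑ i', u i')))
    (i : Fin M) :
    ∫⁻ ω, (∑' t : ℕ,
        Set.indicator {ω' | X t ω' = some i ∧ ∀ s < t, X s ω' ≠ none}
          (fun _ => (1 : ENNReal)) ω) ∂P
      = ENNReal.ofReal (u i) := by
  classical
  set S : ℝ := ∑ i', u i' with hSdef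
  have hS0 : 0 ≤ S := Finset.sum_nonneg fun j _ => hu j
  have h1S : (0:ℝ) < 1 + S := by linarith
  have huiS : u i ≤ S := Finset.single_le_sum (fun j _ => hu j) (Finset.mem_univ i)
  have np1 : (0:ℝ) ≤ 1 / (1 + S) := div_nonneg zero_le_one h1S.le
  have npu : ∀ j, (0:ℝ) ≤ u j / (1 + S) := fun j => div_nonneg (hu j) h1S.le
  have npS : (0:ℝ) ≤ S / (1 + S) := div_nonneg hS0 h1S.le
  have npd : (0:ℝ) ≤ (S - u i) / (1 + S) := div_nonneg (by linarith) h1S.le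
  have npc : (0:ℝ) ≤ (1 + (S - u i)) / (1 + S) := div_nonneg (by linarith) h1S.le
  -- probability of "not none"
  have hne : ∀ t, P {ω | X t ω ≠ none} = ENNReal.ofReal (S / (1 + S)) := by
    intro t
    refine le_antisymm ?_ ?_
    · have hsub : {ω | X t ω ≠ none} = ⋃ j, {ω | X t ω = some j} := by
        ext ω
        simp [Option.ne_none_iff_exists', eq_comm, Set.mem_iUnion]
      rw [hsub]
      calc P (⋃ j, {ω | X t ω = some j}) ≤ ∑' j, P {ω | X t ω = some j} :=
            measure_iUnion_le _
      _ = ∑ j, ENNReal.ofReal (u j / (1 + S)) := by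
            rw [tsum_fintype]; exact Finset.sum_congr rfl fun j _ => hsome t j
      _ = ENNReal.ofReal (∑ j, u j / (1 + S)) := by
            rw [ENNReal.ofReal_sum_of_nonneg (fun j _ => npu j)]
      _ = ENNReal.ofReal (S / (1 + S)) := by rw [← Finset.sum_div]
    · have hofs : ENNReal.ofReal (S / (1 + S))
          = 1 - ENNReal.ofReal (1 / (1 + S)) := by
        rw [← ENNReal.ofReal_one, ← ENNReal.ofReal_sub _ np1]
        congr 1
        field_simp
        ring
      rw [hofs]
      refine tsub_le_iff_right.mpr ?_
      calc (1:ENNReal) = P Set.univ := measure_univ.symm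
      _ ≤ P ({ω | X t ω ≠ none} ∪ {ω | X t ω = none}) := measure_mono (by
          intro x _; by_cases hx : X t x = none
          exacts [Or.inr hx, Or.inl hx])
      _ ≤ P {ω | X t ω ≠ none} + P {ω | X t ω = none} := measure_union_le _ _
      _ = P {ω | X t ω ≠ none} + ENNReal.ofReal (1 / (1 + S)) := by rw [hnone t]
  -- null measurability of the "not none" events
  have hnmN : ∀ t, NullMeasurableSet {ω | X t ω ≠ none} P := by
    intro t
    refine nullMeasurableSet_of_add_compl_eq_one ?_
    have hc : {ω | X t ω ≠ none}ᶜ = {ω | X t ω = none} := by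
      ext ω; simp
    rw [hc, hne t, hnone t, ← ENNReal.ofReal_add npS np1, ← ENNReal.ofReal_one]
    congr 1
    field_simp
    ring
  -- null measurability of the "chose nest i" events
  have hnmI : ∀ t, NullMeasurableSet {ω | X t ω = some i} P := by
    intro t
    refine nullMeasurableSet_of_add_compl_eq_one (le_antisymm ?_ ?_)
    · have hsub : {ω | X t ω = some i}ᶜ ⊆
          {ω | X t ω = none} ∪ ⋃ j ∈ Finset.univ.erase i, {ω | X t ω = some j} := by
        intro ω hω
        simp only [Set.mem_compl_iff, Set.mem_setOf_eq] at hω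
        cases hXt : X t ω with
        | none => exact Or.inl hXt
        | some j =>
          refine Or.inr ?_
          have hji : j ≠ i := fun h => hω (by rw [hXt, h])
          exact Set.mem_biUnion (Finset.mem_erase.mpr ⟨hji, Finset.mem_univ j⟩) hXt
      have hle2 : P {ω | X t ω = some i}ᶜ
          ≤ ENNReal.ofReal ((1 + (S - u i)) / (1 + S)) := by
        calc P {ω | X t ω = some i}ᶜ
            ≤ P ({ω | X t ω = none}
              ∪ ⋃ j ∈ Finset.univ.erase i, {ω | X t ω = some j}) :=
              measure_mono hsub
        _ ≤ P {ω | X t ω = none}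
              + P (⋃ j ∈ Finset.univ.erase i, {ω | X t ω = some j}) :=
              measure_union_le _ _
        _ ≤ P {ω | X t ω = none}
              + ∑ j ∈ Finset.univ.erase i, P {ω | X t ω = some j} := by
              gcongr
              exact measure_biUnion_finset_le _ _
        _ = ENNReal.ofReal (1 / (1 + S))
              + ∑ j ∈ Finset.univ.erase i, ENNReal.ofReal (u j / (1 + S)) := by
              rw [hnone t]
              congr 1
              exact Finset.sum_congr rfl fun j _ => hsome t j
        _ = ENNReal.ofReal (1 / (1 + S))
              + ENNReal.ofReal ((S - u i) / (1 + S)) := by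
              congr 1
              rw [← ENNReal.ofReal_sum_of_nonneg (fun j _ => npu j)]
              congr 1
              rw [← Finset.sum_div]
              congr 1
              have h4 := Finset.add_sum_erase Finset.univ u (Finset.mem_univ i)
              linarith [h4]
        _ = ENNReal.ofReal ((1 + (S - u i)) / (1 + S)) := by
              rw [← ENNReal.ofReal_add np1 npd]
              congr 1
              field_simp
      calc P {ω | X t ω = some i} + P {ω | X t ω = some i}ᶜ
          ≤ ENNReal.ofReal (u i / (1 + S))
            + ENNReal.ofReal ((1 + (S - u i)) / (1 + S)) := by
            rw [hsome t i]; gcongr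
      _ = 1 := by
            rw [← ENNReal.ofReal_add (npu i) npc, ← ENNReal.ofReal_one]
            congr 1
            field_simp
            ring
    · calc (1:ENNReal) = P Set.univ := measure_univ.symm
      _ ≤ P ({ω | X t ω = some i} ∪ {ω | X t ω = some i}ᶜ) := by
            rw [Set.union_compl_self]
      _ ≤ _ := measure_union_le _ _
  -- the epoch events
  set A : ℕ → Set Ω :=
    fun t => {ω' | X t ω' = some i ∧ ∀ s < t, X s ω' ≠ none} with hAdef
  have hnmA : ∀ t, NullMeasurableSet (A t) P := by
    intro t
    have : A t = {ω | X t ω = some i} ∩ ⋂ s, ⋂ (_ : s < t), {ω | X s ω ≠ none} := by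
      ext ω
      simp [hAdef, Set.mem_iInter]
    rw [this]
    exact (hnmI t).inter
      (NullMeasurableSet.iInter fun s => NullMeasurableSet.iInter fun _ => hnmN s)
  -- probability of the epoch events, via independence
  have hPA : ∀ t, P (A t)
      = ENNReal.ofReal (u i / (1 + S)) * (ENNReal.ofReal (S / (1 + S))) ^ t := by
    intro t
    set sets : ℕ → Set (Option (Fin M)) :=
      fun s => if s = t then {some i} else {none}ᶜ with hsets
    have hkey := hindep.measure_inter_preimage_eq_mul (Finset.range (t + 1))
      (sets := sets) (fun _ _ => trivial)
    have hset_eq : (⋂ s ∈ Finset.range (t + 1), X s ⁻¹' sets s) = A t := by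
      ext ω
      simp only [Set.mem_iInter, Finset.mem_range, hAdef, Set.mem_setOf_eq,
        Set.mem_preimage, hsets]
      constructor
      · intro h
        refine ⟨?_, ?_⟩
        · have := h t (Nat.lt_succ_self t)
          simpa using this
        · intro s hs
          have := h s (Nat.lt_succ_of_lt hs)
          rw [if_neg (Nat.ne_of_lt hs)] at this
          simpa using this
      · rintro ⟨h1, h2⟩ s hs
        by_cases hst : s = t
        · subst hst; simpa using h1
        · rw [if_neg hst]
          have hslt : s < t := lt_of_le_of_ne (Nat.lt_succ_iff.mp hs) hst
          simpa using h2 s hslt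
    have hprod : (∏ s ∈ Finset.range (t + 1), P (X s ⁻¹' sets s))
        = ENNReal.ofReal (u i / (1 + S)) * (ENNReal.ofReal (S / (1 + S))) ^ t := by
      rw [Finset.prod_range_succ]
      have h1 : P (X t ⁻¹' sets t) = ENNReal.ofReal (u i / (1 + S)) := by
        have : X t ⁻¹' sets t = {ω | X t ω = some i} := by
          ext ω; simp [hsets]
        rw [this, hsome t i]
      have h2 : ∀ s ∈ Finset.range t,
          P (X s ⁻¹' sets s) = ENNReal.ofReal (S / (1 + S)) := by
        intro s hs
        have hst : s ≠ t := Nat.ne_of_lt (Finset.mem_range.mp hs)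
        have : X s ⁻¹' sets s = {ω | X s ω ≠ none} := by
          ext ω; simp [hsets, hst]
        rw [this, hne s]
      rw [h1, Finset.prod_congr rfl h2, Finset.prod_const, Finset.card_range,
        mul_comm]
    rw [← hset_eq, hkey, hprod]
  -- compute the integral
  have hAEm : ∀ t, AEMeasurable
      (Set.indicator (A t) (fun _ => (1 : ENNReal))) P :=
    fun t => aemeasurable_const.indicator₀ (hnmA t)
  rw [lintegral_tsum hAEm]
  have hint : ∀ t, ∫⁻ ω, Set.indicator (A t) (fun _ => (1 : ENNReal)) ω ∂P
      = P (A t) := by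
    intro t
    exact lintegral_indicator_one₀ (hnmA t)
  calc (∑' t, ∫⁻ ω, Set.indicator (A t) (fun _ => (1 : ENNReal)) ω ∂P)
      = ∑' t, ENNReal.ofReal (u i / (1 + S))
          * (ENNReal.ofReal (S / (1 + S))) ^ t := by
        exact tsum_congr fun t => by rw [hint t, hPA t]
  _ = ENNReal.ofReal (u i / (1 + S))
        * (1 - ENNReal.ofReal (S / (1 + S)))⁻¹ := by
        rw [ENNReal.tsum_mul_left, ENNReal.tsum_geometric]
  _ = ENNReal.ofReal (u i / (1 + S)) * ENNReal.ofReal (1 + S) := by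
        congr 1
        have hofs : (1:ENNReal) - ENNReal.ofReal (S / (1 + S))
            = ENNReal.ofReal (1 / (1 + S)) := by
          rw [← ENNReal.ofReal_one, ← ENNReal.ofReal_sub _ npS]
          congr 1
          field_simp
          ring
        rw [hofs, ← ENNReal.ofReal_inv_of_pos (by positivity : (0:ℝ) < 1 / (1 + S))]
        congr 1
        rw [one_div, inv_inv]
  _ = ENNReal.ofReal (u i) := by
        rw [← ENNReal.ofReal_mul (npu i)]
        congr 1
        field_simp
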